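/- Let Z be a real reflexive Banach space, T > 0, β > 0, and μ ∈ L¹(0,T) nonnegative. Let I : [0,T] × Z → ℝ be such that for each t ∈ [0,T] the functional I(t,·) is sequentially weakly lower semicontinuous on Z, such that for each z the map t ↦ I(t,z) is continuously differentiable, and such that |∂_t I(t,z)| ≤ μ(t)(I(t,z) + β) for all t ∈ [0,T] and z ∈ Z. Then for all sequences t_k → t in [0,T] and z_k ⇀ z weakly in Z it holds that I(t,z) ≤ liminf_{k→∞} I(t_k, z_k). -/

import Mathlib

open Set Filter MeasureTheory

/-- Gronwall-type two-sided estimate via the log trick, for nonnegative `f`. -/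
lemma gronwall_pair (T : ℝ) (μ : ℝ → ℝ) (hμint : MeasureTheory.IntegrableOn μ (Icc 0 T))
    (hμ0 : ∀ t ∈ Icc (0:ℝ) T, 0 ≤ μ t)
    (f f' : ℝ → ℝ)
    (hf : ∀ v ∈ Icc (0:ℝ) T, HasDerivWithinAt f (f' v) (Icc 0 T) v)
    (hf'c : ContinuousOn f' (Icc 0 T))
    (hbd : ∀ v ∈ Icc (0:ℝ) T, |f' v| ≤ μ v * f v)
    (hpos : ∀ v ∈ Icc (0:ℝ) T, 0 ≤ f v)
    (v w : ℝ) (hvw : v ≤ w) (hv : v ∈ Icc (0:ℝ) T) (hw : w ∈ Icc (0:ℝ) T) :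
    f v * Real.exp (-(∫ x in v..w, μ x)) ≤ f w ∧
    f w * Real.exp (-(∫ x in v..w, μ x)) ≤ f v := by
  set a : ℝ := ∫ x in v..w, μ x with ha
  have hIccsub : Icc v w ⊆ Icc 0 T := Icc_subset_Icc hv.1 hw.2
  have hfc : ContinuousOn f (Icc 0 T) := fun x hx => (hf x hx).continuousWithinAt
  have hμii : IntervalIntegrable μ volume v w := by
    refine (hμint.mono_set ?_).intervalIntegrable
    rw [uIcc_of_le hvw]; exact hIccsub
  have key : ∀ ε : ℝ, 0 < ε → |Real.log (f w + ε) - Real.log (f v + ε)| ≤ a := by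
    intro ε hε
    set g : ℝ → ℝ := fun x => Real.log (f x + ε) with hgdef
    set g' : ℝ → ℝ := fun x => f' x / (f x + ε) with hg'def
    have hfpos : ∀ x ∈ Icc (0:ℝ) T, 0 < f x + ε := fun x hx => by linarith [hpos x hx]
    have hg : ∀ x ∈ Icc (0:ℝ) T, HasDerivWithinAt g (g' x) (Icc 0 T) x := by
      intro x hx
      have h1 : HasDerivWithinAt (fun y => f y + ε) (f' x) (Icc 0 T) x :=
        (hf x hx).add_const ε
      have h2 := (Real.hasDerivAt_log (ne_of_gt (hfpos x hx))).comp_hasDerivWithinAt x h1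
      rw [show g' x = (f x + ε)⁻¹ * f' x by simp [hg'def, div_eq_mul_inv, mul_comm]]
      exact h2
    have hgc : ContinuousOn g (Icc (0:ℝ) T) :=
      (hfc.add continuousOn_const).log (fun x hx => ne_of_gt (hfpos x hx))
    have hg'c : ContinuousOn g' (Icc (0:ℝ) T) :=
      hf'c.div (hfc.add continuousOn_const) (fun x hx => ne_of_gt (hfpos x hx))
    have hg'ii : IntervalIntegrable g' volume v w := by
      apply ContinuousOn.intervalIntegrable
      rw [uIcc_of_le hvw]; exact hg'c.mono hIccsub
    have hftc : ∫ x in v..w, g' x = g w - g v := by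
      refine intervalIntegral.integral_eq_sub_of_hasDeriv_right_of_le hvw
        (hgc.mono hIccsub) (fun x hx => ?_) hg'ii
      have hxT : x ∈ Icc (0:ℝ) T := hIccsub (Ioo_subset_Icc_self hx)
      have hnb : Icc (0:ℝ) T ∈ nhds x :=
        Icc_mem_nhds (lt_of_le_of_lt hv.1 hx.1) (lt_of_lt_of_le hx.2 hw.2)
      exact ((hg x hxT).hasDerivAt hnb).hasDerivWithinAt
    have hb : ∀ x ∈ Icc v w, |g' x| ≤ μ x := by
      intro x hx
      have hxT := hIccsub hx
      have h1 : |g' x| = |f' x| / (f x + ε) := by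
        rw [hg'def]; rw [abs_div, abs_of_pos (hfpos x hxT)]
      rw [h1, div_le_iff₀ (hfpos x hxT)]
      calc |f' x| ≤ μ x * f x := hbd x hxT
        _ ≤ μ x * (f x + ε) := by nlinarith [hμ0 x hxT]
    calc |g w - g v| = |∫ x in v..w, g' x| := by rw [hftc]
      _ ≤ ∫ x in v..w, |g' x| := intervalIntegral.abs_integral_le_integral_abs hvw
      _ ≤ ∫ x in v..w, μ x := intervalIntegral.integral_mono_on hvw hg'ii.abs hμii hb
  constructor
  · apply le_of_forall_pos_le_add
    intro ε hε
    have hk := key ε hε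
    have h1 : Real.log (f v + ε) ≤ Real.log (f w + ε) + a := by
      rcases abs_le.mp hk with ⟨h1, h2⟩; linarith
    have h2 : f v + ε ≤ (f w + ε) * Real.exp a := by
      have h3 := Real.exp_le_exp.mpr h1
      rwa [Real.exp_log (by linarith [hpos v hv]), Real.exp_add,
        Real.exp_log (by linarith [hpos w hw])] at h3
    have h3 : f v ≤ (f w + ε) * Real.exp a := le_trans (by linarith) h2
    rw [Real.exp_neg, ← div_eq_mul_inv, div_le_iff₀ (Real.exp_pos a)]
    linarith
  · apply le_of_forall_pos_le_add
    intro ε hε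
    have hk := key ε hε
    have h1 : Real.log (f w + ε) ≤ Real.log (f v + ε) + a := by
      rcases abs_le.mp hk with ⟨h1, h2⟩; linarith
    have h2 : f w + ε ≤ (f v + ε) * Real.exp a := by
      have h3 := Real.exp_le_exp.mpr h1
      rwa [Real.exp_log (by linarith [hpos w hw]), Real.exp_add,
        Real.exp_log (by linarith [hpos v hv])] at h3
    have h3 : f w ≤ (f v + ε) * Real.exp a := le_trans (by linarith) h2
    rw [Real.exp_neg, ← div_eq_mul_inv, div_le_iff₀ (Real.exp_pos a)]
    linarith


lemma const_of_neg (T : ℝ) (μ : ℝ → ℝ)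
    (hμ0 : ∀ t ∈ Icc (0:ℝ) T, 0 ≤ μ t)
    (f f' : ℝ → ℝ)
    (hf : ∀ v ∈ Icc (0:ℝ) T, HasDerivWithinAt f (f' v) (Icc 0 T) v)
    (hbd : ∀ v ∈ Icc (0:ℝ) T, |f' v| ≤ μ v * f v)
    (v₀ : ℝ) (hv₀ : v₀ ∈ Icc (0:ℝ) T) (hneg : f v₀ < 0) :
    ∀ u ∈ Icc (0:ℝ) T, f u = f v₀ := by
  have hfc : ContinuousOn f (Icc 0 T) := fun x hx => (hf x hx).continuousWithinAt
  have hzero : ∀ x ∈ Icc (0:ℝ) T, f x ≤ 0 → f' x = 0 := by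
    intro x hx hfx
    have h1 : μ x * f x ≤ 0 := mul_nonpos_of_nonneg_of_nonpos (hμ0 x hx) hfx
    have h2 : |f' x| ≤ 0 := (hbd x hx).trans h1
    exact abs_eq_zero.mp (le_antisymm h2 (abs_nonneg _))
  -- helper: deriv within Ici is 0 where f ≤ 0 and 0 ≤ x < T
  have hd0 : ∀ x ∈ Icc (0:ℝ) T, x < T → f x ≤ 0 → HasDerivWithinAt f 0 (Ici x) x := by
    intro x hx hxT hfx
    have hmem : Icc (0:ℝ) T ∈ nhdsWithin x (Ici x) := by
      refine mem_nhdsWithin.mpr ⟨Iio T, isOpen_Iio, hxT, ?_⟩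
      intro y hy
      exact ⟨hx.1.trans hy.2, hy.1.le⟩
    have := (hf x hx).mono_of_mem_nhdsWithin hmem
    rwa [hzero x hx hfx] at this
  -- Step A : f is negative everywhere
  have hallneg : ∀ u ∈ Icc (0:ℝ) T, f u < 0 := by
    intro u hu
    by_contra hcon
    push_neg at hcon
    rcases le_or_gt v₀ u with hle | hlt
    · have hsub : Icc v₀ u ⊆ Icc (0:ℝ) T := Icc_subset_Icc hv₀.1 hu.2
      have hcon' : ContinuousOn f (Icc v₀ u) := hfc.mono hsub
      obtain ⟨w, hwmem, hw0⟩ :=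
        intermediate_value_Icc hle hcon' (⟨hneg.le, hcon⟩ : (0:ℝ) ∈ Icc (f v₀) (f u))
      set Z : Set ℝ := Icc v₀ u ∩ f ⁻¹' {0} with hZ
      have hZc : IsClosed Z := hcon'.preimage_isClosed_of_isClosed isClosed_Icc isClosed_singleton
      have hZne : Z.Nonempty := ⟨w, hwmem, hw0⟩
      have hZbdd : BddBelow Z := ⟨v₀, fun x hx => hx.1.1⟩
      set w' := sInf Z with hw'
      have hw'Z : w' ∈ Z := hZc.csInf_mem hZne hZbdd
      have hw'0 : f w' = 0 := hw'Z.2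
      have hv₀w' : v₀ < w' := by
        rcases lt_or_eq_of_le hw'Z.1.1 with h | h
        · exact h
        · exfalso; rw [← h] at hw'0; linarith
      have hnegIco : ∀ x ∈ Ico v₀ w', f x < 0 := by
        intro x hx
        have hxmem : x ∈ Icc v₀ u := ⟨hx.1, hx.2.le.trans hw'Z.1.2⟩
        by_contra hx0
        push_neg at hx0
        obtain ⟨y, hymem, hy0⟩ :=
          intermediate_value_Icc hx.1 (hcon'.mono (Icc_subset_Icc le_rfl hxmem.2))
            (⟨hneg.le, hx0⟩ : (0:ℝ) ∈ Icc (f v₀) (f x))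
        have hyZ : y ∈ Z := ⟨⟨hymem.1, hymem.2.trans hxmem.2⟩, hy0⟩
        have := csInf_le hZbdd hyZ
        have : w' ≤ x := this.trans hymem.2
        exact absurd hx.2 (not_lt.mpr this)
      have hconst := constant_of_has_deriv_right_zero
        (f := f) (a := v₀) (b := w')
        (hfc.mono (Icc_subset_Icc hv₀.1 ((hw'Z.1.2).trans hu.2)))
        (fun x hx => by
          have hxmem : x ∈ Icc (0:ℝ) T :=
            ⟨hv₀.1.trans hx.1, (hx.2.le.trans hw'Z.1.2).trans hu.2⟩
          exact hd0 x hxmem (lt_of_lt_of_le (hx.2.trans_le hw'Z.1.2) hu.2)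
            (hnegIco x hx).le)
      have := hconst w' ⟨hv₀w'.le, le_rfl⟩
      rw [hw'0] at this
      linarith
    · -- u < v₀ : symmetric, zeros in [u, v₀], take sSup
      have hsub : Icc u v₀ ⊆ Icc (0:ℝ) T := Icc_subset_Icc hu.1 hv₀.2
      have hcon' : ContinuousOn f (Icc u v₀) := hfc.mono hsub
      obtain ⟨w, hwmem, hw0⟩ :=
        intermediate_value_Icc' hlt.le hcon' (⟨hneg.le, hcon⟩ : (0:ℝ) ∈ Icc (f v₀) (f u))
      set Z : Set ℝ := Icc u v₀ ∩ f ⁻¹' {0} with hZ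
      have hZc : IsClosed Z := hcon'.preimage_isClosed_of_isClosed isClosed_Icc isClosed_singleton
      have hZne : Z.Nonempty := ⟨w, hwmem, hw0⟩
      have hZbdd : BddAbove Z := ⟨v₀, fun x hx => hx.1.2⟩
      set w' := sSup Z with hw'
      have hw'Z : w' ∈ Z := hZc.csSup_mem hZne hZbdd
      have hw'0 : f w' = 0 := hw'Z.2
      have hw'v₀ : w' < v₀ := by
        rcases lt_or_eq_of_le hw'Z.1.2 with h | h
        · exact h
        · exfalso; rw [h] at hw'0; linarith
      have hnegIoc : ∀ x ∈ Ioc w' v₀, f x < 0 := by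
        intro x hx
        have hxmem : x ∈ Icc u v₀ := ⟨hw'Z.1.1.trans hx.1.le, hx.2⟩
        by_contra hx0
        push_neg at hx0
        obtain ⟨y, hymem, hy0⟩ :=
          intermediate_value_Icc' hx.2 (hcon'.mono (Icc_subset_Icc hxmem.1 le_rfl))
            (⟨hneg.le, hx0⟩ : (0:ℝ) ∈ Icc (f v₀) (f x))
        have hyZ : y ∈ Z := ⟨⟨hxmem.1.trans hymem.1, hymem.2⟩, hy0⟩
        have : y ≤ w' := le_csSup hZbdd hyZ
        have : x ≤ w' := hymem.1.trans this
        exact absurd hx.1 (not_lt.mpr this)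
      have hconst := constant_of_has_deriv_right_zero
        (f := f) (a := w') (b := v₀)
        (hfc.mono (Icc_subset_Icc (hu.1.trans hw'Z.1.1) hv₀.2))
        (fun x hx => by
          have hxmem : x ∈ Icc (0:ℝ) T :=
            ⟨hu.1.trans (hw'Z.1.1.trans hx.1), (hx.2.le.trans hv₀.2)⟩
          have hfx : f x ≤ 0 := by
            rcases eq_or_lt_of_le hx.1 with h | h
            · rw [← h, hw'0]
            · exact (hnegIoc x ⟨h, hx.2.le⟩).le
          exact hd0 x hxmem (lt_of_lt_of_le hx.2 hv₀.2) hfx)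
      have := hconst v₀ ⟨hw'v₀.le, le_rfl⟩
      rw [this] at hneg
      rw [hw'0] at hneg
      linarith
  -- Step B : f' = 0 everywhere, so f is constant on [0,T]
  have hconst := constant_of_has_deriv_right_zero (f := f) (a := (0:ℝ)) (b := T) hfc
    (fun x hx => hd0 x (Ico_subset_Icc_self hx) hx.2 (hallneg x (Ico_subset_Icc_self hx)).le)
  intro u hu
  rw [hconst u hu, hconst v₀ hv₀]

theorem stmt19
    {Z : Type*} [NormedAddCommGroup Z] [NormedSpace ℝ Z] [CompleteSpace Z]
    (hrefl : Function.Surjective ⇑(NormedSpace.inclusionInDoubleDual ℝ Z))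
    (T β : ℝ) (hT : 0 < T) (hβ : 0 < β)
    (μ : ℝ → ℝ) (hμint : MeasureTheory.IntegrableOn μ (Icc 0 T))
    (hμ0 : ∀ t ∈ Icc (0:ℝ) T, 0 ≤ μ t)
    (I dI : ℝ → Z → ℝ)
    (hlsc : ∀ t ∈ Icc (0:ℝ) T, ∀ (zk : ℕ → Z) (zl : Z),
      (∀ f : Z →L[ℝ] ℝ, Tendsto (fun k => f (zk k)) atTop (nhds (f zl))) →
      ((I t zl : ℝ) : EReal) ≤ liminf (fun k => ((I t (zk k) : ℝ) : EReal)) atTop)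
    (hdiff : ∀ z : Z, ∀ t ∈ Icc (0:ℝ) T,
      HasDerivWithinAt (fun s => I s z) (dI t z) (Icc 0 T) t)
    (hcont : ∀ z : Z, ContinuousOn (fun t => dI t z) (Icc 0 T))
    (hbound : ∀ z : Z, ∀ t ∈ Icc (0:ℝ) T, |dI t z| ≤ μ t * (I t z + β)) :
    ∀ (tk : ℕ → ℝ) (t : ℝ) (zk : ℕ → Z) (zl : Z),
      (∀ k, tk k ∈ Icc (0:ℝ) T) → t ∈ Icc (0:ℝ) T → Tendsto tk atTop (nhds t) →
      (∀ f : Z →L[ℝ] ℝ, Tendsto (fun k => f (zk k)) atTop (nhds (f zl))) →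
      ((I t zl : ℝ) : EReal) ≤ liminf (fun k => ((I (tk k) (zk k) : ℝ) : EReal)) atTop := by
  intro tk t zk zl htk ht htt hweak
  rw [le_liminf_iff]
  intro b hb
  -- pick real numbers b₀ < c₀ with b < b₀ and (c₀ : EReal) < I t zl
  obtain ⟨c₀, hbc, hcI⟩ := EReal.lt_iff_exists_real_btwn.mp hb
  obtain ⟨b₀, hbb₀, hb₀c⟩ := EReal.lt_iff_exists_real_btwn.mp hbc
  have hb₀c₀ : b₀ < c₀ := by exact_mod_cast hb₀c
  -- (1) eventually c₀ < I t (zk k)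
  have hlim := hlsc t ht zk zl hweak
  have hev1 : ∀ᶠ k in atTop, c₀ < I t (zk k) := by
    have h1 : (c₀ : EReal) < liminf (fun k => ((I t (zk k) : ℝ) : EReal)) atTop :=
      lt_of_lt_of_le hcI hlim
    filter_upwards [eventually_lt_of_lt_liminf h1] with k hk
    exact_mod_cast hk
  -- (2) the integral of μ from t to tk k tends to 0
  have hGc : ContinuousOn (fun v => ∫ x in (0:ℝ)..v, μ x) (Icc 0 T) := by
    have := intervalIntegral.continuousOn_primitive_interval
      (a := (0:ℝ)) (b := T) (μ := volume) (f := μ) (by rwa [uIcc_of_le hT.le])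
    rwa [uIcc_of_le hT.le] at this
  have htkin : Tendsto tk atTop (nhdsWithin t (Icc 0 T)) :=
    tendsto_nhdsWithin_iff.mpr ⟨htt, Eventually.of_forall htk⟩
  have hGt : Tendsto (fun k => ∫ x in (0:ℝ)..(tk k), μ x) atTop
      (nhds (∫ x in (0:ℝ)..t, μ x)) := (hGc t ht).tendsto.comp htkin
  have hii : ∀ v w : ℝ, v ∈ Icc (0:ℝ) T → w ∈ Icc (0:ℝ) T →
      IntervalIntegrable μ volume v w := by
    intro v w hv hw
    refine (hμint.mono_set ?_).intervalIntegrable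
    intro x hx
    rcases le_total v w with h | h
    · rw [uIcc_of_le h] at hx; exact ⟨hv.1.trans hx.1, hx.2.trans hw.2⟩
    · rw [uIcc_of_ge h] at hx; exact ⟨hw.1.trans hx.1, hx.2.trans hv.2⟩
  have hsplit : ∀ k, ∫ x in t..(tk k), μ x
      = (∫ x in (0:ℝ)..(tk k), μ x) - ∫ x in (0:ℝ)..t, μ x := by
    intro k
    have h1 := intervalIntegral.integral_add_adjacent_intervals
      (a := (0:ℝ)) (b := t) (c := tk k) (hii 0 t (left_mem_Icc.mpr hT.le) ht)
      (hii t (tk k) ht (htk k))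
    linarith [h1]
  have hFlim : Tendsto (fun k => ∫ x in t..(tk k), μ x) atTop (nhds 0) := by
    have := hGt.sub_const (∫ x in (0:ℝ)..t, μ x)
    rw [sub_self] at this
    simpa only [hsplit] using this
  -- A k : the absolute integral
  set A : ℕ → ℝ := fun k => |∫ x in t..(tk k), μ x| with hA
  have hAlim : Tendsto A atTop (nhds 0) := by
    have := hFlim.abs
    rwa [abs_zero] at this
  have hexplim : Tendsto (fun k => (c₀ + β) * Real.exp (-(A k))) atTop (nhds (c₀ + β)) := by
    have h1 : Tendsto (fun k => Real.exp (-(A k))) atTop (nhds 1) := by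
      have hneg : Tendsto (fun k => -(A k)) atTop (nhds 0) := by
        simpa using hAlim.neg
      have := (Real.continuous_exp.tendsto 0).comp hneg
      simpa [Function.comp_def] using this
    have := h1.const_mul (c₀ + β)
    simpa using this
  have hev2 : ∀ᶠ k in atTop, b₀ + β < (c₀ + β) * Real.exp (-(A k)) :=
    hexplim.eventually (eventually_gt_nhds (by linarith : b₀ + β < c₀ + β))
  -- conclusion
  filter_upwards [hev1, hev2] with k hk1 hk2
  refine lt_trans hbb₀ ?_
  rw [EReal.coe_lt_coe_iff]
  -- goal : b₀ < I (tk k) (zk k)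
  set f : ℝ → ℝ := fun v => I v (zk k) + β with hfdef
  have hfd : ∀ v ∈ Icc (0:ℝ) T, HasDerivWithinAt f (dI v (zk k)) (Icc 0 T) v :=
    fun v hv => (hdiff (zk k) v hv).add_const β
  have hfbd : ∀ v ∈ Icc (0:ℝ) T, |dI v (zk k)| ≤ μ v * f v :=
    fun v hv => hbound (zk k) v hv
  have hgoal : b₀ + β < f (tk k) → b₀ < I (tk k) (zk k) := by
    intro h; simp only [hfdef] at h; linarith
  apply hgoal
  have hft : c₀ + β < f t := by simp only [hfdef]; linarith
  by_cases hcase : ∀ v ∈ Icc (0:ℝ) T, 0 ≤ f v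
  · -- Gronwall case
    rcases le_total t (tk k) with hord | hord
    · have hgp := (gronwall_pair T μ hμint hμ0 f (fun v => dI v (zk k)) hfd
        (hcont (zk k)) hfbd hcase t (tk k) hord ht (htk k)).1
      have hAeq : ∫ x in t..(tk k), μ x = A k := by
        show _ = |∫ x in t..(tk k), μ x|
        rw [abs_of_nonneg]
        apply intervalIntegral.integral_nonneg hord
        intro x hx
        exact hμ0 x ⟨ht.1.trans hx.1, hx.2.trans (htk k).2⟩
      rw [hAeq] at hgp
      calc b₀ + β < (c₀ + β) * Real.exp (-(A k)) := hk2
        _ ≤ f t * Real.exp (-(A k)) :=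
            mul_le_mul_of_nonneg_right hft.le (Real.exp_pos _).le
        _ ≤ f (tk k) := hgp
    · have hgp := (gronwall_pair T μ hμint hμ0 f (fun v => dI v (zk k)) hfd
        (hcont (zk k)) hfbd hcase (tk k) t hord (htk k) ht).2
      have h0 : (0:ℝ) ≤ ∫ x in (tk k)..t, μ x := by
        apply intervalIntegral.integral_nonneg hord
        intro x hx
        exact hμ0 x ⟨(htk k).1.trans hx.1, hx.2.trans ht.2⟩
      have hsymm : ∫ x in t..(tk k), μ x = -∫ x in (tk k)..t, μ x :=
        intervalIntegral.integral_symm _ _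
      have hAeq : ∫ x in (tk k)..t, μ x = A k := by
        show _ = |∫ x in t..(tk k), μ x|
        rw [hsymm, abs_neg, abs_of_nonneg h0]
      rw [hAeq] at hgp
      calc b₀ + β < (c₀ + β) * Real.exp (-(A k)) := hk2
        _ ≤ f t * Real.exp (-(A k)) :=
            mul_le_mul_of_nonneg_right hft.le (Real.exp_pos _).le
        _ ≤ f (tk k) := hgp
  · -- constancy case
    push_neg at hcase
    obtain ⟨v₀, hv₀mem, hv₀⟩ := hcase
    have hconst := const_of_neg T μ hμ0 f (fun v => dI v (zk k)) hfd hfbd v₀ hv₀mem hv₀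
    have h1 : f (tk k) = f t := by rw [hconst (tk k) (htk k), hconst t ht]
    rw [h1]
    linarith
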